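/- If U is an n×n unitary matrix, then the real part Re(U) and the imaginary part Im(U) admit simultaneous real singular value decompositions: there exist real orthogonal matrices O₁, O₂ and diagonal matrices C = diag(cos θ_l), S = diag(sin θ_l) such that Re(U) = O₁ C O₂ and Im(U) = O₁ S O₂. -/

import Mathlib

open Matrix Module.End

namespace RISVD
variable {n : ℕ}

variable {n : ℕ}

noncomputable def C (M : Matrix (Fin n) (Fin n) ℝ) : Matrix (Fin n) (Fin n) ℂ :=
  M.map (Complex.ofRealHom : ℝ →+* ℂ)

lemma C_apply (M : Matrix (Fin n) (Fin n) ℝ) (i j : Fin n) : C M i j = (M i j : ℂ) := rfl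

lemma C_mul (M N : Matrix (Fin n) (Fin n) ℝ) : C (M * N) = C M * C N :=
  Matrix.map_mul

lemma C_one : C (1 : Matrix (Fin n) (Fin n) ℝ) = 1 :=
  Matrix.map_one _ (map_zero _) (map_one _)

lemma C_transpose (M : Matrix (Fin n) (Fin n) ℝ) : C (Mᵀ) = (C M)ᵀ := rfl

lemma C_inj {M N : Matrix (Fin n) (Fin n) ℝ} (h : C M = C N) : M = N := by
  ext i j
  have := congrFun (congrFun h i) j
  simpa [C_apply, Complex.ofReal_inj] using this

lemma C_conj (M : Matrix (Fin n) (Fin n) ℝ) : (C M).map (starRingEnd ℂ) = C M := by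
  ext i j
  simp [C_apply, Matrix.map_apply, Complex.conj_ofReal]

lemma C_conjTranspose (M : Matrix (Fin n) (Fin n) ℝ) : (C M)ᴴ = C (Mᵀ) := by
  ext i j
  simp [C_apply, Matrix.conjTranspose_apply, Complex.conj_ofReal]

lemma C_diagonal (f : Fin n → ℝ) : C (diagonal f) = diagonal (fun l => (f l : ℂ)) := by
  ext i j
  by_cases h : i = j <;> simp [C_apply, diagonal, Matrix.of_apply, h]

lemma split {M : Matrix (Fin n) (Fin n) ℂ} {P Q : Matrix (Fin n) (Fin n) ℝ}
    (h : M = C P + Complex.I • C Q) : M.map Complex.re = P ∧ M.map Complex.im = Q := by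
  constructor <;> ext i j <;>
    simp [h, Matrix.map_apply, Matrix.add_apply, Matrix.smul_apply, C_apply, smul_eq_mul]

lemma decomp (M : Matrix (Fin n) (Fin n) ℂ) :
    M = C (M.map Complex.re) + Complex.I • C (M.map Complex.im) := by
  ext i j
  simp only [Matrix.add_apply, Matrix.smul_apply, C_apply, Matrix.map_apply, smul_eq_mul]
  rw [mul_comm, Complex.re_add_im]

lemma conj_map_mul (M N : Matrix (Fin n) (Fin n) ℂ) :
    (M * N).map (starRingEnd ℂ) = M.map (starRingEnd ℂ) * N.map (starRingEnd ℂ) :=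
  Matrix.map_mul

theorem joint_diag (X Y : Matrix (Fin n) (Fin n) ℝ) (hX : X.IsHermitian) (hY : Y.IsHermitian)
    (hXY : X * Y = Y * X) :
    ∃ (O : Matrix (Fin n) (Fin n) ℝ) (d e : Fin n → ℝ),
      Oᵀ * O = 1 ∧ O * Oᵀ = 1 ∧ X = O * diagonal d * Oᵀ ∧ Y = O * diagonal e * Oᵀ := by
  set A := Matrix.toEuclideanLin X with hA
  set B := Matrix.toEuclideanLin Y with hB
  have hAs : A.IsSymmetric := (Matrix.isHermitian_iff_isSymmetric).1 hX
  have hBs : B.IsSymmetric := (Matrix.isHermitian_iff_isSymmetric).1 hY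
  have hcomm : Commute A B := by
    show A * B = B * A
    apply LinearMap.ext
    intro x
    show A (B x) = B (A x)
    simp [hA, hB, Matrix.toEuclideanLin_apply, Matrix.mulVec_mulVec, hXY]
  set V : ℝ × ℝ → Submodule ℝ (EuclideanSpace ℝ (Fin n)) :=
    fun p => eigenspace A p.2 ⊓ eigenspace B p.1 with hVdef
  have hV : DirectSum.IsInternal V :=
    LinearMap.IsSymmetric.directSum_isInternal_of_commute hAs hBs hcomm
  have hV' : OrthogonalFamily ℝ (fun p => V p) (fun p => (V p).subtypeₗᵢ) :=
    LinearMap.IsSymmetric.orthogonalFamily_eigenspace_inf_eigenspace hAs hBs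
  -- restrict to nonzero components to get a finite index type
  have hfin : Set.Finite {p : ℝ × ℝ | V p ≠ ⊥} := by
    apply Set.Finite.subset (Set.Finite.prod (Module.End.finite_hasEigenvalue (f := B)) (Module.End.finite_hasEigenvalue (f := A)))
    rintro ⟨s, t⟩ hp
    constructor
    · show Module.End.HasEigenvalue B s
      rw [Module.End.HasEigenvalue]
      intro h
      exact hp (by simp [hVdef, h])
    · show Module.End.HasEigenvalue A t
      rw [Module.End.HasEigenvalue]
      intro h
      exact hp (by simp [hVdef, h])
  have : Finite {p : ℝ × ℝ // V p ≠ ⊥} := hfin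
  have : Fintype {p : ℝ × ℝ // V p ≠ ⊥} := Fintype.ofFinite _
  set W : {p : ℝ × ℝ // V p ≠ ⊥} → Submodule ℝ (EuclideanSpace ℝ (Fin n)) :=
    fun p => V p.1 with hWdef
  have hW : DirectSum.IsInternal W := DirectSum.isInternal_ne_bot_iff.2 hV
  have hW' : OrthogonalFamily ℝ (fun p => W p) (fun p => (W p).subtypeₗᵢ) :=
    hV'.comp Subtype.val_injective
  have hn : Module.finrank ℝ (EuclideanSpace ℝ (Fin n)) = n := finrank_euclideanSpace_fin
  set b := hW.subordinateOrthonormalBasis hn hW' with hb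
  set μ : Fin n → ℝ × ℝ := fun j => (hW.subordinateOrthonormalBasisIndex hn j hW' : {p // V p ≠ ⊥}).1 with hμ
  have hmem : ∀ j, b j ∈ V (μ j) := fun j => hW.subordinateOrthonormalBasis_subordinate hn j hW'
  set d : Fin n → ℝ := fun j => (μ j).2 with hd
  set e : Fin n → ℝ := fun j => (μ j).1 with he
  have hXb : ∀ j, X *ᵥ ⇑(b j) = d j • ⇑(b j) := by
    intro j
    have h1 : A (b j) = d j • (b j) := Module.End.mem_eigenspace_iff.1 (hmem j).1
    simpa only [hA, Matrix.toEuclideanLin_apply, WithLp.ofLp_smul] using congr(⇑$(h1))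
  have hYb : ∀ j, Y *ᵥ ⇑(b j) = e j • ⇑(b j) := by
    intro j
    have h1 : B (b j) = e j • (b j) := Module.End.mem_eigenspace_iff.1 (hmem j).2
    simpa only [hB, Matrix.toEuclideanLin_apply, WithLp.ofLp_smul] using congr(⇑$(h1))
  set O : Matrix (Fin n) (Fin n) ℝ := (EuclideanSpace.basisFun (Fin n) ℝ).toBasis.toMatrix b.toBasis with hO
  have hOu : O ∈ Matrix.unitaryGroup (Fin n) ℝ :=
    (EuclideanSpace.basisFun (Fin n) ℝ).toMatrix_orthonormalBasis_mem_unitary b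
  have hOapp : ∀ i j, O i j = b j i := fun i j => rfl
  have hOsingle : ∀ j, O *ᵥ Pi.single j 1 = ⇑(b j) := by
    intro j; simp only [Matrix.mulVec_single, hOapp, mul_one, MulOpposite.op_one, one_smul]; rfl
  have hstar : star O * O = 1 := Matrix.mem_unitaryGroup_iff'.mp hOu
  have hstar2 : O * star O = 1 := Matrix.mem_unitaryGroup_iff.mp hOu
  have hOTb : ∀ j, (star O) *ᵥ ⇑(b j) = Pi.single j 1 := by
    intro j
    rw [← hOsingle, Matrix.mulVec_mulVec, hstar, Matrix.one_mulVec]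
  have key : ∀ (M : Matrix (Fin n) (Fin n) ℝ) (f : Fin n → ℝ),
      (∀ j, M *ᵥ ⇑(b j) = f j • ⇑(b j)) → (star O) * M * O = diagonal f := by
    intro M f hMb
    apply Matrix.toEuclideanLin.injective
    apply Module.Basis.ext (EuclideanSpace.basisFun (Fin n) ℝ).toBasis
    intro i
    simp only [Matrix.toEuclideanLin_apply, OrthonormalBasis.coe_toBasis,
      EuclideanSpace.basisFun_apply, PiLp.ofLp_single, ← Matrix.mulVec_mulVec,
      hOsingle, hMb, Matrix.mulVec_smul, hOTb, Matrix.diagonal_mulVec_single,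
      WithLp.toLp_smul, PiLp.toLp_single, mul_one]
    apply PiLp.ext
    intro j
    simp only [PiLp.smul_apply, EuclideanSpace.single_apply, smul_eq_mul, mul_ite, mul_one,
      mul_zero]
  have hXd : (star O) * X * O = diagonal d := key X d hXb
  have hYe : (star O) * Y * O = diagonal e := key Y e hYb
  have hT : star O = Oᵀ := Matrix.conjTranspose_eq_transpose_of_trivial O
  rw [hT] at hXd hYe hstar hstar2
  have expand : ∀ M : Matrix (Fin n) (Fin n) ℝ, O * (Oᵀ * M * O) * Oᵀ = M := by
    intro M
    have : O * (Oᵀ * M * O) * Oᵀ = (O * Oᵀ) * M * (O * Oᵀ) := by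
      simp only [Matrix.mul_assoc]
    rw [this, hstar2, Matrix.one_mul, Matrix.mul_one]
  exact ⟨O, d, e, hstar, hstar2, by rw [← hXd, expand], by rw [← hYe, expand]⟩

end RISVD

open RISVD

theorem re_im_simultaneous_svd (n : ℕ) (U : Matrix (Fin n) (Fin n) ℂ)
    (hU : Uᴴ * U = 1) :
    ∃ (O₁ O₂ : Matrix (Fin n) (Fin n) ℝ) (θ : Fin n → ℝ),
      O₁ᵀ * O₁ = 1 ∧ O₂ᵀ * O₂ = 1 ∧
      U.map Complex.re = O₁ * Matrix.diagonal (fun l => Real.cos (θ l)) * O₂ ∧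
      U.map Complex.im = O₁ * Matrix.diagonal (fun l => Real.sin (θ l)) * O₂ := by
  have hU' : U * Uᴴ = 1 := mul_eq_one_comm.mp hU
  set S : Matrix (Fin n) (Fin n) ℂ := U * Uᵀ with hSdef
  -- basic conjugation facts
  have hUconj : U.map (starRingEnd ℂ) = Uᴴᵀ := by
    ext i j; simp [Matrix.map_apply, Matrix.conjTranspose_apply]
  have hUTconj : Uᵀ.map (starRingEnd ℂ) = Uᴴ := by
    ext i j; simp [Matrix.map_apply, Matrix.conjTranspose_apply]
  have hSsymm : Sᵀ = S := by
    rw [hSdef, Matrix.transpose_mul, Matrix.transpose_transpose]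
  -- S̄ * S = 1
  have hconjS : S.map (starRingEnd ℂ) * S = 1 := by
    rw [hSdef, conj_map_mul, hUconj, hUTconj]
    calc Uᴴᵀ * Uᴴ * (U * Uᵀ) = Uᴴᵀ * (Uᴴ * U) * Uᵀ := by
          simp only [Matrix.mul_assoc]
      _ = Uᴴᵀ * Uᵀ := by rw [hU, Matrix.mul_one]
      _ = (U * Uᴴ)ᵀ := by rw [Matrix.transpose_mul]
      _ = 1 := by rw [hU', Matrix.transpose_one]
  -- S * Ū = U
  have hSU : S * U.map (starRingEnd ℂ) = U := by
    rw [hSdef, hUconj]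
    calc U * Uᵀ * Uᴴᵀ = U * (Uᴴ * U)ᵀ := by rw [Matrix.transpose_mul, Matrix.mul_assoc]
      _ = U := by rw [hU, Matrix.transpose_one, Matrix.mul_one]
  set X : Matrix (Fin n) (Fin n) ℝ := S.map Complex.re with hXdef
  set Y : Matrix (Fin n) (Fin n) ℝ := S.map Complex.im with hYdef
  have hS_eq : S = C X + Complex.I • C Y := decomp S
  have hXsymm : Xᵀ = X := by
    ext i j
    have := congrFun (congrFun hSsymm i) j
    simpa [hXdef, Matrix.map_apply, Matrix.transpose_apply] using congrArg Complex.re this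
  have hYsymm : Yᵀ = Y := by
    ext i j
    have := congrFun (congrFun hSsymm i) j
    simpa [hYdef, Matrix.map_apply, Matrix.transpose_apply] using congrArg Complex.im this
  have hXherm : X.IsHermitian := by
    rw [Matrix.IsHermitian, Matrix.conjTranspose_eq_transpose_of_trivial]; exact hXsymm
  have hYherm : Y.IsHermitian := by
    rw [Matrix.IsHermitian, Matrix.conjTranspose_eq_transpose_of_trivial]; exact hYsymm
  -- conj S = C X - I • C Y
  have hSconj_eq : S.map (starRingEnd ℂ) = C X - Complex.I • C Y := by
    rw [hS_eq]
    ext i j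
    simp [Matrix.map_apply, Matrix.add_apply, Matrix.sub_apply, Matrix.smul_apply, C_apply,
      smul_eq_mul, Complex.conj_ofReal, mul_comm, sub_eq_add_neg]
  -- the two key real identities
  have hkey : (C X - Complex.I • C Y) * (C X + Complex.I • C Y) = 1 := by
    rw [← hSconj_eq, ← hS_eq]; exact hconjS
  have hexpand : (C X - Complex.I • C Y) * (C X + Complex.I • C Y)
      = C (X * X + Y * Y) + Complex.I • C (X * Y - Y * X) := by
    have h1 : C (X * X + Y * Y) = C X * C X + C Y * C Y := by
      rw [show C (X*X+Y*Y) = C (X*X) + C (Y*Y) from ?_, C_mul, C_mul]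
      · ext i j; simp [C_apply, Matrix.add_apply]
    have h2 : C (X * Y - Y * X) = C X * C Y - C Y * C X := by
      rw [show C (X*Y-Y*X) = C (X*Y) - C (Y*X) from ?_, C_mul, C_mul]
      · ext i j; simp [C_apply, Matrix.sub_apply]
    rw [h1, h2]
    have hI : (Complex.I • C Y) * (Complex.I • C X) = -(C Y * C X) := by
      rw [Matrix.smul_mul, Matrix.mul_smul, smul_smul, Complex.I_mul_I, neg_one_smul]
    have hI2 : (Complex.I • C Y) * (Complex.I • C Y) = -(C Y * C Y) := by
      rw [Matrix.smul_mul, Matrix.mul_smul, smul_smul, Complex.I_mul_I, neg_one_smul]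
    rw [sub_mul, mul_add, mul_add, Matrix.mul_smul, Matrix.smul_mul, hI2]
    module
  have hone : (1 : Matrix (Fin n) (Fin n) ℂ) = C 1 + Complex.I • C 0 := by
    rw [C_one]
    ext i j; simp [C_apply, Matrix.add_apply, Matrix.smul_apply]
  have hsum : X * X + Y * Y = 1 ∧ X * Y - Y * X = 0 := by
    have h := hexpand.symm.trans hkey
    have h' : C (X * X + Y * Y) + Complex.I • C (X * Y - Y * X)
        = C 1 + Complex.I • C 0 := by rw [h, hone]
    have hs := split (M := C 1 + Complex.I • C 0)
      (P := X * X + Y * Y) (Q := X * Y - Y * X) h'.symm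
    have hs' : (C (1 : Matrix (Fin n) (Fin n) ℝ) + Complex.I • C (0 : Matrix (Fin n) (Fin n) ℝ)).map Complex.re = 1 ∧
        (C (1 : Matrix (Fin n) (Fin n) ℝ) + Complex.I • C (0 : Matrix (Fin n) (Fin n) ℝ)).map Complex.im = 0 :=
      split rfl
    exact ⟨hs.1.symm.trans hs'.1, hs.2.symm.trans hs'.2⟩
  obtain ⟨O₁, d, e, hO1t, hO1, hXd, hYe⟩ :=
    joint_diag X Y hXherm hYherm (by have := hsum.2; rwa [sub_eq_zero] at this)
  -- squares of eigenvalue pairs sum to 1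
  have sqf : ∀ f : Fin n → ℝ, (O₁ * diagonal f * O₁ᵀ) * (O₁ * diagonal f * O₁ᵀ)
      = O₁ * diagonal (fun i => f i * f i) * O₁ᵀ := by
    intro f
    calc (O₁ * diagonal f * O₁ᵀ) * (O₁ * diagonal f * O₁ᵀ)
        = O₁ * (diagonal f * ((O₁ᵀ * O₁) * (diagonal f * O₁ᵀ))) := by
          simp only [Matrix.mul_assoc]
      _ = O₁ * (diagonal f * (diagonal f * O₁ᵀ)) := by
          rw [hO1t, Matrix.one_mul]
      _ = O₁ * ((diagonal f * diagonal f) * O₁ᵀ) := by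
          rw [Matrix.mul_assoc]
      _ = O₁ * diagonal (fun i => f i * f i) * O₁ᵀ := by
          rw [Matrix.diagonal_mul_diagonal, ← Matrix.mul_assoc]
  have hdiag1 : diagonal (fun i => d i * d i + e i * e i) = (1 : Matrix (Fin n) (Fin n) ℝ) := by
    have h1 : O₁ * diagonal (fun i => d i * d i + e i * e i) * O₁ᵀ = 1 := by
      have h2 : X * X + Y * Y = O₁ * diagonal (fun i => d i * d i + e i * e i) * O₁ᵀ := by
        rw [hXd, hYe, sqf d, sqf e, ← Matrix.add_mul, ← Matrix.mul_add, Matrix.diagonal_add]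
      rw [← h2, hsum.1]
    calc diagonal (fun i => d i * d i + e i * e i)
        = (O₁ᵀ * O₁) * diagonal (fun i => d i * d i + e i * e i) * (O₁ᵀ * O₁) := by
          rw [hO1t, Matrix.one_mul, Matrix.mul_one]
      _ = O₁ᵀ * (O₁ * diagonal (fun i => d i * d i + e i * e i) * O₁ᵀ) * O₁ := by
          simp only [Matrix.mul_assoc]
      _ = 1 := by rw [h1, Matrix.mul_one, hO1t]
  have hde : ∀ l, d l * d l + e l * e l = 1 := by
    intro l
    have h3 := congrFun (congrFun hdiag1 l) l
    simpa [Matrix.diagonal_apply_eq, Matrix.one_apply_eq, Pi.add_apply, Pi.mul_apply] using h3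
  -- angles
  set z : Fin n → ℂ := fun l => (d l : ℂ) + (e l : ℂ) * Complex.I with hzdef
  have hzre : ∀ l, (z l).re = d l := by intro l; simp [hzdef]
  have hzim : ∀ l, (z l).im = e l := by intro l; simp [hzdef]
  have hzabs : ∀ l, ‖z l‖ = 1 := by
    intro l
    rw [Complex.norm_def, Complex.normSq_apply, hzre, hzim, hde]
    exact Real.sqrt_one
  have hzne : ∀ l, z l ≠ 0 := by
    intro l h
    have := hzabs l
    rw [h] at this
    simp at this
  set φ : Fin n → ℝ := fun l => (z l).arg with hφdef
  have hcos : ∀ l, Real.cos (φ l) = d l := by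
    intro l
    rw [hφdef, Complex.cos_arg (hzne l), hzabs, hzre, div_one]
  have hsin : ∀ l, Real.sin (φ l) = e l := by
    intro l
    rw [hφdef, Complex.sin_arg, hzabs, hzim, div_one]
  set θ : Fin n → ℝ := fun l => φ l / 2 with hθdef
  have hzexp : ∀ l, Complex.exp (φ l * Complex.I) = z l := by
    intro l
    rw [Complex.exp_mul_I, ← Complex.ofReal_cos, ← Complex.ofReal_sin, hcos, hsin]
  -- complexified matrices
  set O₁c : Matrix (Fin n) (Fin n) ℂ := C O₁ with hO1cdef
  have hO1ct : O₁cᵀ * O₁c = 1 := by rw [hO1cdef, ← C_transpose, ← C_mul, hO1t, C_one]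
  have hO1cc : O₁c * O₁cᵀ = 1 := by rw [hO1cdef, ← C_transpose, ← C_mul, hO1, C_one]
  set Dp : Matrix (Fin n) (Fin n) ℂ := diagonal (fun l => Complex.exp (θ l * Complex.I)) with hDp
  set Dm : Matrix (Fin n) (Fin n) ℂ := diagonal (fun l => Complex.exp (-θ l * Complex.I)) with hDm
  have hDpm : Dp * Dm = 1 := by
    rw [hDp, hDm, Matrix.diagonal_mul_diagonal]
    have : (fun l => Complex.exp (θ l * Complex.I) * Complex.exp (-θ l * Complex.I))
        = fun _ => (1 : ℂ) := by
      funext l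
      rw [← Complex.exp_add]
      ring_nf
      exact Complex.exp_zero
    rw [this, Matrix.diagonal_one]
  have hfun1 : (fun l => Complex.exp (θ l * Complex.I) * Complex.exp (θ l * Complex.I)) = z := by
    funext l
    rw [← Complex.exp_add, ← hzexp l]
    congr 1
    push_cast [hθdef]
    ring
  have hfun2 : (fun l => Complex.exp (-θ l * Complex.I) * z l)
      = (fun l => Complex.exp (θ l * Complex.I)) := by
    funext l
    rw [← hzexp l, ← Complex.exp_add]
    congr 1
    push_cast [hθdef]
    ring
  have hfun3 : (fun l => (starRingEnd ℂ) (Complex.exp (-θ l * Complex.I)))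
      = (fun l => Complex.exp (θ l * Complex.I)) := by
    funext l
    rw [← Complex.exp_conj]
    congr 1
    simp [Complex.conj_ofReal]
  have hfun3' : star (fun l => Complex.exp (-θ l * Complex.I))
      = fun l => Complex.exp (θ l * Complex.I) := by
    funext l
    show star _ = _
    rw [Complex.star_def]
    exact congrFun hfun3 l
  have hDDz : Dp * Dp = diagonal z := by
    rw [hDp, Matrix.diagonal_mul_diagonal]
    rw [hfun1]
  -- S in diagonal form
  have hCdod : ∀ f : Fin n → ℝ, C (O₁ * diagonal f * O₁ᵀ)
      = O₁c * diagonal (fun l => (f l : ℂ)) * O₁cᵀ := by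
    intro f
    rw [C_mul, C_mul, C_transpose, C_diagonal, hO1cdef]
  have hdiagz : diagonal (fun l => (d l : ℂ)) + Complex.I • diagonal (fun l => (e l : ℂ))
      = diagonal z := by
    ext i j
    by_cases h : i = j
    · subst h; simp [Matrix.diagonal_apply_eq, hzdef, mul_comm]
    · simp [Matrix.diagonal_apply_ne _ h]
  have hSz : S = O₁c * diagonal z * O₁cᵀ := by
    rw [hS_eq, hXd, hYe, hCdod d, hCdod e, ← hdiagz]
    rw [Matrix.mul_add, Matrix.add_mul, Matrix.mul_smul, Matrix.smul_mul]
  -- define O₂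
  set O₂c : Matrix (Fin n) (Fin n) ℂ := Dm * O₁cᵀ * U with hO2cdef
  have hUO : U = O₁c * Dp * O₂c := by
    rw [hO2cdef]
    calc U = (O₁c * O₁cᵀ) * U := by rw [hO1cc, Matrix.one_mul]
      _ = O₁c * ((Dp * Dm) * (O₁cᵀ * U)) := by rw [hDpm, Matrix.one_mul, Matrix.mul_assoc]
      _ = O₁c * Dp * (Dm * O₁cᵀ * U) := by simp only [Matrix.mul_assoc]
  -- alternative form of O₂c via conj U
  have hO2alt : O₂c = Dp * O₁cᵀ * U.map (starRingEnd ℂ) := by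
    rw [hO2cdef]
    conv_lhs => rw [← hSU, hSz]
    calc Dm * O₁cᵀ * (O₁c * diagonal z * O₁cᵀ * U.map (starRingEnd ℂ))
        = Dm * ((O₁cᵀ * O₁c) * (diagonal z * (O₁cᵀ * U.map (starRingEnd ℂ)))) := by
          simp only [Matrix.mul_assoc]
      _ = (Dm * diagonal z) * (O₁cᵀ * U.map (starRingEnd ℂ)) := by
          rw [hO1ct, Matrix.one_mul, Matrix.mul_assoc]
      _ = Dp * O₁cᵀ * U.map (starRingEnd ℂ) := by
          rw [hDm, Matrix.diagonal_mul_diagonal, hfun2, ← hDp, Matrix.mul_assoc]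
  -- O₂c has real entries
  have hdiagconj : ∀ g : Fin n → ℂ,
      (diagonal g).map (starRingEnd ℂ) = diagonal (fun l => (starRingEnd ℂ) (g l)) := by
    intro g
    ext i j
    by_cases h : i = j
    · subst h; simp
    · simp [Matrix.diagonal_apply_ne _ h]
  have hO1cconj : (O₁cᵀ).map (starRingEnd ℂ) = O₁cᵀ := by
    rw [hO1cdef, ← C_transpose, C_conj]
  have hconjO2 : O₂c.map (starRingEnd ℂ) = O₂c := by
    have h1 : O₂c.map (starRingEnd ℂ) = Dp * O₁cᵀ * U.map (starRingEnd ℂ) := by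
      rw [hO2cdef, conj_map_mul, conj_map_mul, hO1cconj, hDm, hdiagconj, hfun3, ← hDp]
    rw [h1, ← hO2alt]
  set O₂ : Matrix (Fin n) (Fin n) ℝ := O₂c.map Complex.re with hO2def
  have hCO2 : C O₂ = O₂c := by
    ext i j
    have h := congrFun (congrFun hconjO2 i) j
    rw [C_apply, hO2def, Matrix.map_apply]
    exact Complex.conj_eq_iff_re.1 h
  -- orthogonality of O₂
  have hO2orth : O₂ᵀ * O₂ = 1 := by
    apply C_inj
    rw [C_mul, C_transpose, hCO2, C_one]
    have hherm : O₂cᵀ = O₂cᴴ := by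
      ext i j
      rw [Matrix.transpose_apply, Matrix.conjTranspose_apply]
      exact (congrFun (congrFun hconjO2 j) i).symm
    have h1 : (O₁cᵀ)ᴴ = O₁c := by
      rw [hO1cdef, ← C_transpose, C_conjTranspose, Matrix.transpose_transpose]
    have h2 : Dmᴴ = Dp := by
      rw [hDm, Matrix.diagonal_conjTranspose, hfun3', hDp]
    rw [hherm, hO2cdef, Matrix.conjTranspose_mul, Matrix.conjTranspose_mul, h1, h2]
    calc Uᴴ * (O₁c * Dp) * (Dm * O₁cᵀ * U)
        = Uᴴ * (O₁c * ((Dp * Dm) * (O₁cᵀ * U))) := by simp only [Matrix.mul_assoc]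
      _ = Uᴴ * (O₁c * (O₁cᵀ * U)) := by rw [hDpm, Matrix.one_mul]
      _ = Uᴴ * U := by rw [← Matrix.mul_assoc O₁c, hO1cc, Matrix.one_mul]
      _ = 1 := hU
  -- final decomposition
  have hDpsplit : Dp = C (diagonal (fun l => Real.cos (θ l)))
      + Complex.I • C (diagonal (fun l => Real.sin (θ l))) := by
    rw [C_diagonal, C_diagonal, hDp]
    ext i j
    by_cases h : i = j
    · subst h
      simp only [Matrix.add_apply, Matrix.smul_apply, Matrix.diagonal_apply_eq, smul_eq_mul]
      rw [Complex.exp_mul_I, ← Complex.ofReal_cos, ← Complex.ofReal_sin]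
      ring
    · simp [Matrix.diagonal_apply_ne _ h]
  have hUdecomp : U = C (O₁ * diagonal (fun l => Real.cos (θ l)) * O₂)
      + Complex.I • C (O₁ * diagonal (fun l => Real.sin (θ l)) * O₂) := by
    rw [C_mul, C_mul, C_mul, C_mul, hCO2, ← hO1cdef, hUO, hDpsplit]
    rw [Matrix.mul_add, Matrix.add_mul, Matrix.mul_smul, Matrix.smul_mul]
  obtain ⟨hre, him⟩ := split hUdecomp
  exact ⟨O₁, O₂, θ, hO1t, hO2orth, hre, him⟩
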